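/- Let X be a positive definite n×n complex matrix with m·I ≤ X ≤ M·I for 0 < m ≤ M. Then X + Mm·X⁻¹ ≤ (M + m)·I in the Loewner order. -/

import Mathlib

open Matrix
open scoped ComplexOrder

noncomputable section
namespace Paper

variable {n : ℕ}

/-- Real part `(A + Aᴴ)/2`. -/
def re (A : Matrix (Fin n) (Fin n) ℂ) : Matrix (Fin n) (Fin n) ℂ := (2⁻¹ : ℂ) • (A + Aᴴ)

/-- Imaginary part `(A - Aᴴ)/(2i)`. -/
def im (A : Matrix (Fin n) (Fin n) ℂ) : Matrix (Fin n) (Fin n) ℂ :=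
  (2 * Complex.I)⁻¹ • (A - Aᴴ)

/-- The sector `S_α`. -/
def sector (α : ℝ) : Set ℂ := {z | 0 < z.re ∧ |z.im| ≤ z.re * Real.tan α}

/-- Numerical range of a matrix. -/
def numericalRange (A : Matrix (Fin n) (Fin n) ℂ) : Set ℂ :=
  {z | ∃ x : Fin n → ℂ, star x ⬝ᵥ x = 1 ∧ z = star x ⬝ᵥ (A *ᵥ x)}

/-- Loewner order: `X ≤ Y` iff `Y - X` is positive semidefinite. -/
def loewnerLE (X Y : Matrix (Fin n) (Fin n) ℂ) : Prop := (Y - X).PosSemidef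

lemma re_isHermitian (A : Matrix (Fin n) (Fin n) ℂ) : (re A).IsHermitian := by
  show ((2⁻¹ : ℂ) • (A + Aᴴ))ᴴ = (2⁻¹ : ℂ) • (A + Aᴴ)
  rw [Matrix.conjTranspose_smul, Matrix.conjTranspose_add,
    Matrix.conjTranspose_conjTranspose, add_comm Aᴴ A]
  simp

/-- The `j`-th largest element of `v` (descending sort). -/
def nthLargest (v : Fin n → ℝ) (j : Fin n) : ℝ :=
  ((List.ofFn v).mergeSort (fun a b => decide (b ≤ a))).get
    (Fin.cast (by simp) j)

/-- `j`-th largest eigenvalue of a Hermitian matrix. -/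
def eigDesc {A : Matrix (Fin n) (Fin n) ℂ} (hA : A.IsHermitian) (j : Fin n) : ℝ :=
  nthLargest hA.eigenvalues j

/-- `j`-th largest singular value. -/
def singular (A : Matrix (Fin n) (Fin n) ℂ) (j : Fin n) : ℝ :=
  nthLargest (fun i => Real.sqrt ((Matrix.isHermitian_conjTranspose_mul_self A).eigenvalues i)) j

/-- Square root of a positive semidefinite matrix (the former Mathlib `PosSemidef.sqrt`). -/
def psdSqrt {A : Matrix (Fin n) (Fin n) ℂ} (hA : A.PosSemidef) : Matrix (Fin n) (Fin n) ℂ :=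
  hA.1.eigenvectorUnitary.1 * diagonal (((↑) : ℝ → ℂ) ∘ (√·) ∘ hA.1.eigenvalues) *
    (star hA.1.eigenvectorUnitary : Matrix (Fin n) (Fin n) ℂ)

/-- Weighted geometric mean of positive definite matrices. -/
def sharp (v : ℝ) {A B : Matrix (Fin n) (Fin n) ℂ} (hA : A.PosDef) (hB : B.PosDef) :
    Matrix (Fin n) (Fin n) ℂ :=
  psdSqrt hA.posSemidef *
    (Matrix.isHermitian_mul_mul_conjTranspose (psdSqrt hA.posSemidef)⁻¹ hB.1).cfc
      (fun x => Real.rpow x v) * psdSqrt hA.posSemidef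

/-- Weighted arithmetic mean. -/
def arith (v : ℝ) (A B : Matrix (Fin n) (Fin n) ℂ) : Matrix (Fin n) (Fin n) ℂ :=
  (1 - v) • A + v • B

/-- Weighted harmonic mean. -/
def harm (v : ℝ) (A B : Matrix (Fin n) (Fin n) ℂ) : Matrix (Fin n) (Fin n) ℂ :=
  ((1 - v) • A⁻¹ + v • B⁻¹)⁻¹

/-- Kantorovich constant. -/
def K (h : ℝ) : ℝ := (h + 1) ^ 2 / (4 * h)



lemma norm_eigvec {X : Matrix (Fin n) (Fin n) ℂ} (hH : X.IsHermitian) (j : Fin n) :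
    star ⇑(hH.eigenvectorBasis j) ⬝ᵥ ⇑(hH.eigenvectorBasis j) = 1 := by
  have h1 := hH.eigenvectorBasis.orthonormal.1 j
  have h2 : (inner ℂ (hH.eigenvectorBasis j) (hH.eigenvectorBasis j) : ℂ) = 1 := by
    rw [inner_self_eq_norm_sq_to_K, h1]; norm_num
  rw [EuclideanSpace.inner_eq_star_dotProduct] at h2
  rw [dotProduct_comm] at h2
  exact h2

lemma eig_le {X : Matrix (Fin n) (Fin n) ℂ} (hH : X.IsHermitian) (c : ℝ)
    (h : (X - c • 1).PosSemidef) (j : Fin n) : c ≤ hH.eigenvalues j := by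
  have h0 := h.dotProduct_mulVec_nonneg ⇑(hH.eigenvectorBasis j)
  rw [sub_mulVec, hH.mulVec_eigenvectorBasis, smul_mulVec, one_mulVec,
    dotProduct_sub, dotProduct_smul, dotProduct_smul, norm_eigvec hH j] at h0
  have h0' : (0:ℂ) ≤ ((hH.eigenvalues j - c : ℝ) : ℂ) := by
    push_cast
    simpa [Complex.real_smul] using h0
  rw [Complex.zero_le_real] at h0'
  linarith

lemma le_eig {X : Matrix (Fin n) (Fin n) ℂ} (hH : X.IsHermitian) (c : ℝ)
    (h : (c • 1 - X).PosSemidef) (j : Fin n) : hH.eigenvalues j ≤ c := by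
  have h0 := h.dotProduct_mulVec_nonneg ⇑(hH.eigenvectorBasis j)
  rw [sub_mulVec, hH.mulVec_eigenvectorBasis, smul_mulVec, one_mulVec,
    dotProduct_sub, dotProduct_smul, dotProduct_smul, norm_eigvec hH j] at h0
  have h0' : (0:ℂ) ≤ ((c - hH.eigenvalues j : ℝ) : ℂ) := by
    push_cast
    simpa [Complex.real_smul] using h0
  rw [Complex.zero_le_real] at h0'
  linarith

lemma sandwich_mul (U A B : Matrix (Fin n) (Fin n) ℂ) (h : star U * U = 1) :
    (U * A * star U) * (U * B * star U) = U * (A * B) * star U := by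
  simp only [Matrix.mul_assoc]
  rw [← Matrix.mul_assoc (star U) U, h, Matrix.one_mul]

/-- `X + Mm X⁻¹ ≤ (M + m) I`. -/
theorem add_smul_inv_le (X : Matrix (Fin n) (Fin n) ℂ) (hX : X.PosDef)
    (m M : ℝ) (hm : 0 < m) (hmM : m ≤ M)
    (h1 : loewnerLE (m • (1 : Matrix (Fin n) (Fin n) ℂ)) X) (h2 : loewnerLE X (M • 1)) :
    loewnerLE (X + (M * m) • X⁻¹) ((M + m) • 1) := by
  have hH := hX.isHermitian
  set U : Matrix (Fin n) (Fin n) ℂ := (hH.eigenvectorUnitary : Matrix (Fin n) (Fin n) ℂ) with hU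
  set lam := hH.eigenvalues with hlam
  have hUU : U * star U = 1 := (Matrix.mem_unitaryGroup_iff).mp hH.eigenvectorUnitary.2
  have hsUU : star U * U = 1 := (Matrix.mem_unitaryGroup_iff').mp hH.eigenvectorUnitary.2
  have hpos : ∀ j, 0 < lam j := fun j => hX.eigenvalues_pos j
  have hml : ∀ j, m ≤ lam j := fun j => eig_le hH m h1 j
  have hlM : ∀ j, lam j ≤ M := fun j => le_eig hH M h2 j
  have hXspec : X = U * diagonal (fun i => (lam i : ℂ)) * star U := by
    exact hH.spectral_theorem
  have hXinv : X⁻¹ = U * diagonal (fun i => ((lam i : ℂ))⁻¹) * star U := by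
    apply Matrix.inv_eq_right_inv
    rw [hXspec, sandwich_mul U _ _ hsUU, diagonal_mul_diagonal]
    have : (fun i => (lam i : ℂ) * ((lam i : ℂ))⁻¹) = fun _ => 1 := by
      funext i
      exact mul_inv_cancel₀ (by exact_mod_cast (hpos i).ne')
    rw [this, diagonal_one, Matrix.mul_one, hUU]
  have hone : (1 : Matrix (Fin n) (Fin n) ℂ) = U * diagonal (fun _ => 1) * star U := by
    rw [diagonal_one, Matrix.mul_one, hUU]
  have hT : (M + m) • (1 : Matrix (Fin n) (Fin n) ℂ) - (X + (M * m) • X⁻¹) =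
      U * diagonal (fun i => (((M + m) - lam i - (M * m) * (lam i)⁻¹ : ℝ) : ℂ)) * star U := by
    rw [hXinv, hXspec, hone, ← Matrix.smul_mul, ← Matrix.mul_smul, ← Matrix.smul_mul,
      ← Matrix.mul_smul, ← Matrix.add_mul, ← Matrix.mul_add, ← Matrix.sub_mul, ← Matrix.mul_sub]
    congr 1
    congr 1
    ext i j
    rcases eq_or_ne i j with rfl | hne
    · simp [Matrix.diagonal_apply_eq, Complex.real_smul]
      push_cast
      ring
    · simp [Matrix.diagonal_apply_ne _ hne]
      exact Or.inr (Matrix.one_apply_ne hne)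
  have hd : ∀ i, (0:ℂ) ≤ (((M + m) - lam i - (M * m) * (lam i)⁻¹ : ℝ) : ℂ) := by
    intro i
    rw [Complex.zero_le_real]
    have key : (M + m) - lam i - (M * m) * (lam i)⁻¹ = (M - lam i) * (lam i - m) / lam i := by
      field_simp [(hpos i).ne']
      ring
    rw [key]
    exact div_nonneg (mul_nonneg (by linarith [hlM i]) (by linarith [hml i])) (hpos i).le
  rw [loewnerLE, hT]
  have hdiag : (diagonal (fun i => (((M + m) - lam i - (M * m) * (lam i)⁻¹ : ℝ) : ℂ))).PosSemidef :=
    PosSemidef.diagonal (by intro i; exact hd i)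
  have := hdiag.mul_mul_conjTranspose_same U
  simpa [Matrix.star_eq_conjTranspose] using this


end Paper
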